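/- Let A be a finite nonempty set, let U be the uniform (equiprobable) distribution on A, and let P be any probability mass function on A. Then the total variation distance satisfies |P−U| ≥ √( 2·( exp(−H(P)) − 1/|A| ) ), where H(P) = −Σ_{a ∈ A} P(a)·ln P(a) is the Shannon entropy of P in nats and |P−U| = Σ_{a ∈ A} |P(a) − 1/|A||. -/

import Mathlib

open Finset Real

theorem tv_from_uniform_lower_bound {A : Type*} [Fintype A] [Nonempty A]
    (P : A → ℝ) (hP : ∀ a, 0 ≤ P a) (hPsum : ∑ a, P a = 1) :
    ∑ a, |P a - 1 / (Fintype.card A : ℝ)| ≥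
      Real.sqrt (2 * (Real.exp (-(-∑ a, P a * Real.log (P a))) -
        1 / (Fintype.card A : ℝ))) := by
  classical
  set n : ℝ := (Fintype.card A : ℝ) with hn
  have hnpos : 0 < n := by positivity
  set u : ℝ := 1 / n with hu
  -- Step 1: exp (∑ P log P) ≤ ∑ P^2
  have step1 : Real.exp (∑ a, P a * Real.log (P a)) ≤ ∑ a, P a ^ 2 := by
    set t : Finset A := Finset.univ.filter (fun a => P a ≠ 0) with ht
    have hsum_t : ∑ a ∈ t, P a = 1 := by
      rw [← hPsum]
      exact Finset.sum_filter_ne_zero _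
    have hlog : ∑ a, P a * Real.log (P a) = ∑ a ∈ t, P a * Real.log (P a) := by
      rw [ht, Finset.sum_filter]
      apply Finset.sum_congr rfl
      intro a _
      by_cases h : P a = 0 <;> simp [h]
    rw [hlog]
    have hj := convexOn_exp.map_sum_le (t := t) (w := P) (p := fun a => Real.log (P a))
      (fun a _ => hP a) hsum_t (fun a _ => Set.mem_univ _)
    simp only [smul_eq_mul] at hj
    calc Real.exp (∑ a ∈ t, P a * Real.log (P a)) ≤ ∑ a ∈ t, P a * Real.exp (Real.log (P a)) := hj
      _ = ∑ a ∈ t, P a ^ 2 := by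
          apply Finset.sum_congr rfl
          intro a ha
          have : P a ≠ 0 := (Finset.mem_filter.mp ha).2
          rw [Real.exp_log (lt_of_le_of_ne (hP a) (Ne.symm this)), sq]
      _ ≤ ∑ a, P a ^ 2 := Finset.sum_le_sum_of_subset_of_nonneg (Finset.filter_subset _ _)
          (fun a _ _ => sq_nonneg _)
  -- Step 2: ∑ P^2 - 1/n = ∑ (P - u)^2
  have card_sum : ∑ _a : A, u = 1 := by
    rw [Finset.sum_const, Finset.card_univ, nsmul_eq_mul, hu]
    field_simp
    exact hn.symm
  have step2 : ∑ a, (P a - u) ^ 2 = (∑ a, P a ^ 2) - u := by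
    have : ∀ a : A, (P a - u) ^ 2 = P a ^ 2 - 2 * u * P a + u ^ 2 := by intro a; ring
    simp only [this]
    rw [Finset.sum_add_distrib, Finset.sum_sub_distrib, ← Finset.mul_sum, hPsum,
      Finset.sum_const, Finset.card_univ, nsmul_eq_mul]
    have : (Fintype.card A : ℝ) * u ^ 2 = u := by
      rw [hu]; field_simp; ring
    rw [this]; ring
  -- Step 3: ∑ (P - u)^2 ≤ (∑ |P - u|)^2 / 2
  set x : A → ℝ := fun a => P a - u with hx
  have hxsum : ∑ a, x a = 0 := by
    simp only [hx]
    rw [Finset.sum_sub_distrib, hPsum, card_sum, sub_self]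
  set S : ℝ := ∑ a, max (x a) 0 with hS
  have hneg : ∑ a, max (-x a) 0 = S := by
    have : ∀ a : A, max (-x a) 0 = max (x a) 0 - x a := by
      intro a; rcases le_total (x a) 0 with h | h
      · rw [max_eq_left (by linarith), max_eq_right h]; ring
      · rw [max_eq_right (by linarith), max_eq_left h]; ring
    simp only [this]
    rw [Finset.sum_sub_distrib, hxsum, sub_zero, hS]
  have habs : ∑ a, |x a| = 2 * S := by
    have : ∀ a : A, |x a| = max (x a) 0 + max (-x a) 0 := by
      intro a; rcases le_total (x a) 0 with h | h
      · rw [abs_of_nonpos h, max_eq_right h, max_eq_left (by linarith)]; ring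
      · rw [abs_of_nonneg h, max_eq_left h, max_eq_right (by linarith)]; ring
    simp only [this]
    rw [Finset.sum_add_distrib, hneg, hS]; ring
  have hsq : ∀ a : A, x a ^ 2 = max (x a) 0 ^ 2 + max (-x a) 0 ^ 2 := by
    intro a; rcases le_total (x a) 0 with h | h
    · rw [max_eq_right h, max_eq_left (by linarith)]; ring
    · rw [max_eq_left h, max_eq_right (by linarith)]; ring
  have step3 : ∑ a, x a ^ 2 ≤ 2 * S ^ 2 := by
    calc ∑ a, x a ^ 2 = (∑ a, max (x a) 0 ^ 2) + ∑ a, max (-x a) 0 ^ 2 := by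
          simp only [hsq]; rw [Finset.sum_add_distrib]
      _ ≤ (∑ a, max (x a) 0) ^ 2 + (∑ a, max (-x a) 0) ^ 2 := by
          gcongr <;> exact Finset.sum_sq_le_sq_sum_of_nonneg (fun a _ => le_max_right _ _)
      _ = 2 * S ^ 2 := by rw [hneg, ← hS]; ring
  -- combine
  have key : 2 * (Real.exp (∑ a, P a * Real.log (P a)) - u) ≤ (∑ a, |x a|) ^ 2 := by
    rw [habs]
    nlinarith [step1, step2, step3]
  rw [ge_iff_le, neg_neg]
  calc Real.sqrt (2 * (Real.exp (∑ a, P a * Real.log (P a)) - u))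
      ≤ Real.sqrt ((∑ a, |x a|) ^ 2) := Real.sqrt_le_sqrt key
    _ = ∑ a, |x a| := Real.sqrt_sq (Finset.sum_nonneg fun a _ => abs_nonneg _)
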